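/- Let g be a positive integer, let p be any real number, let w be a weight vector on Fin g, and let S : Fin g → ℝ be nonnegative. Then the affinely shifted power mean converges to the weighted arithmetic mean: the function β ↦ M_p(fun i => S i + β; w) − β tends to ∑ i, w i * S i as β → ∞, and the function β ↦ M_p(fun i => β − S i; w) − β tends to −(∑ i, w i * S i) as β → ∞. -/

import Mathlib

open scoped BigOperators

/-- The weighted power mean `M_p(S; w)`. For `p ≠ 0` it is
`(∑ i, w i * (S i)^p)^(1/p)`; for `p = 0` it is `exp (∑ i, w i * log (S i))`. -/
noncomputable def pmean (g : ℕ) (p : ℝ) (w S : Fin g → ℝ) : ℝ :=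
  if p = 0 then Real.exp (∑ i, w i * Real.log (S i))
  else (∑ i, w i * S i ^ p) ^ (1 / p)

open Filter Real

lemma pmean_mul (g : ℕ) (p : ℝ) (w : Fin g → ℝ) (hw : ∀ i, 0 ≤ w i)
    (hw1 : ∑ i, w i = 1) (a : Fin g → ℝ) (ha : ∀ i, 0 < a i)
    {β : ℝ} (hβ : 0 < β) :
    pmean g p w (fun i => β * a i) = β * pmean g p w a := by
  unfold pmean
  by_cases hp : p = 0
  · simp only [hp, if_pos rfl, if_true]
    have hsum : ∑ i, w i * Real.log (β * a i)
        = Real.log β + ∑ i, w i * Real.log (a i) := by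
      calc ∑ i, w i * Real.log (β * a i)
          = ∑ i, (w i * Real.log β + w i * Real.log (a i)) := by
            refine Finset.sum_congr rfl fun i _ => ?_
            rw [Real.log_mul hβ.ne' (ha i).ne', mul_add]
        _ = (∑ i, w i) * Real.log β + ∑ i, w i * Real.log (a i) := by
            rw [Finset.sum_add_distrib, ← Finset.sum_mul]
        _ = Real.log β + ∑ i, w i * Real.log (a i) := by rw [hw1, one_mul]
    rw [hsum, Real.exp_add, Real.exp_log hβ]
  · simp only [if_neg hp]
    have h1 : ∑ i, w i * (β * a i) ^ p = β ^ p * ∑ i, w i * a i ^ p := by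
      rw [Finset.mul_sum]
      refine Finset.sum_congr rfl fun i _ => ?_
      rw [Real.mul_rpow hβ.le (ha i).le]; ring
    rw [h1, Real.mul_rpow (Real.rpow_nonneg hβ.le p)
      (Finset.sum_nonneg fun i _ => mul_nonneg (hw i) (Real.rpow_nonneg (ha i).le p)),
      ← Real.rpow_mul hβ.le, mul_one_div_cancel hp, Real.rpow_one]

lemma pmean_hasDerivAt (g : ℕ) (p : ℝ) (w c : Fin g → ℝ) (hw1 : ∑ i, w i = 1) :
    HasDerivAt (fun t => pmean g p w (fun i => 1 + c i * t)) (∑ i, w i * c i) 0 := by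
  have hlin : ∀ i : Fin g, HasDerivAt (fun t : ℝ => 1 + c i * t) (c i) 0 := by
    intro i
    simpa using (hasDerivAt_const (0:ℝ) (1:ℝ)).fun_add ((hasDerivAt_id (0:ℝ)).const_mul (c i))
  by_cases hp : p = 0
  · simp only [pmean, hp, if_pos rfl]
    have hsum : HasDerivAt (fun t => ∑ i, w i * Real.log (1 + c i * t))
        (∑ i, w i * c i) 0 := by
      have := HasDerivAt.fun_sum (fun i (_ : i ∈ Finset.univ) =>
        (((hlin i).log (by norm_num)).const_mul (w i)))
      simpa using this
    simpa using hsum.exp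
  · simp only [pmean, if_neg hp]
    have hterm : ∀ i : Fin g,
        HasDerivAt (fun t : ℝ => w i * (1 + c i * t) ^ p) (w i * (c i * p)) 0 := by
      intro i
      have h := ((hlin i).rpow_const (p := p) (Or.inl (by norm_num))).const_mul (w i)
      simpa using h
    have hu : HasDerivAt (fun t => ∑ i, w i * (1 + c i * t) ^ p)
        ((∑ i, w i * c i) * p) 0 := by
      have := HasDerivAt.fun_sum (fun i (_ : i ∈ Finset.univ) => hterm i)
      have hrw : ∑ i, w i * (c i * p) = (∑ i, w i * c i) * p := by
        rw [Finset.sum_mul]; exact Finset.sum_congr rfl fun i _ => by ring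
      rwa [hrw] at this
    have hval : ∑ i, w i * (1 + c i * (0:ℝ)) ^ p = 1 := by
      simp [hw1]
    have h := hu.rpow_const (p := 1/p) (Or.inl (by rw [hval]; norm_num))
    rw [hval] at h
    have : (∑ i, w i * c i) * p * (1/p) * (1:ℝ) ^ (1/p - 1) = ∑ i, w i * c i := by
      rw [Real.one_rpow, mul_one, mul_assoc, mul_one_div_cancel hp, mul_one]
    rwa [this] at h

/-- Affinely shifted power means degenerate to the weighted arithmetic mean:
`M_p(S + β; w) − β → ∑ i, w i * S i` and `M_p(β − S; w) − β → −∑ i, w i * S i`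
as `β → ∞`, for every `p`. -/
theorem pmean_shift_tendsto_arith (g : ℕ) (hg : 0 < g) (p : ℝ)
    (w S : Fin g → ℝ) (hw : ∀ i, 0 ≤ w i) (hw1 : ∑ i, w i = 1)
    (hS : ∀ i, 0 ≤ S i) :
    Filter.Tendsto (fun β : ℝ => pmean g p w (fun i => S i + β) - β)
      Filter.atTop (nhds (∑ i, w i * S i)) ∧
    Filter.Tendsto (fun β : ℝ => pmean g p w (fun i => β - S i) - β)
      Filter.atTop (nhds (-(∑ i, w i * S i))) := by
  have key : ∀ c : Fin g → ℝ,
      Tendsto (fun β : ℝ => pmean g p w (fun i => β + c i) - β) atTop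
        (nhds (∑ i, w i * c i)) := by
    intro c
    have hder := pmean_hasDerivAt g p w c hw1
    have hslope := hasDerivAt_iff_tendsto_slope.mp hder
    have hinv : Tendsto (fun β : ℝ => β⁻¹) atTop (nhdsWithin (0:ℝ) {(0:ℝ)}ᶜ) := by
      refine tendsto_nhdsWithin_of_tendsto_nhds_of_eventually_within _
        tendsto_inv_atTop_zero ?_
      filter_upwards [eventually_gt_atTop (0:ℝ)] with β hβ
      exact inv_ne_zero hβ.ne'
    have hcomp := hslope.comp hinv
    refine hcomp.congr' ?_
    filter_upwards [eventually_gt_atTop (0:ℝ),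
      eventually_ge_atTop (1 + ∑ i, |c i|)] with β hβ hβ2
    have hci : ∀ i, |c i| < β := by
      intro i
      have h1 : |c i| ≤ ∑ j, |c j| :=
        Finset.single_le_sum (fun j _ => abs_nonneg (c j)) (Finset.mem_univ i)
      linarith
    have hpos : ∀ i, 0 < 1 + c i * β⁻¹ := by
      intro i
      have h1 : -β < c i := by have := neg_abs_le (c i); linarith [hci i]
      have h2 : -β * β⁻¹ < c i * β⁻¹ := by
        exact mul_lt_mul_of_pos_right h1 (inv_pos.mpr hβ)
      have h3 : -β * β⁻¹ = -1 := by field_simp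
      linarith [h3 ▸ h2]
    have hφ0 : pmean g p w (fun i => 1 + c i * (0:ℝ)) = 1 := by
      unfold pmean
      by_cases hp : p = 0 <;> simp [hp, hw1]
    have hmul := pmean_mul g p w hw hw1 (fun i => 1 + c i * β⁻¹) hpos hβ
    have heq : (fun i => β * (1 + c i * β⁻¹)) = fun i => β + c i := by
      funext i; field_simp
    rw [heq] at hmul
    show slope (fun t => pmean g p w (fun i => 1 + c i * t)) 0 β⁻¹ = _
    rw [slope_def_field, hφ0, hmul]
    field_simp
    ring
  constructor
  · have h := key S
    have heq : (fun β : ℝ => pmean g p w (fun i => S i + β) - β)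
        = fun β : ℝ => pmean g p w (fun i => β + S i) - β := by
      funext β
      rw [show (fun i => S i + β) = fun i => β + S i from funext fun i => add_comm _ _]
    rw [heq]; exact h
  · have h := key (fun i => -S i)
    have heq : (fun β : ℝ => pmean g p w (fun i => β - S i) - β)
        = fun β : ℝ => pmean g p w (fun i => β + -S i) - β := by
      funext β
      rw [show (fun i => β - S i) = fun i => β + -S i from funext fun i => sub_eq_add_neg _ _]
    rw [heq]
    have hsum : ∑ i, w i * -S i = -(∑ i, w i * S i) := by
      rw [← Finset.sum_neg_distrib]
      exact Finset.sum_congr rfl fun i _ => by ring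
    rwa [hsum] at h
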